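/- Let (ũ_k)_{k≥0} be the Lehmer sequence associated to ζ and η. Then for every positive integer n and every finite set A ⊆ {1, …, n}, log lcm(ũ_a : a ∈ A) = Σ_{m ≥ 1, gcd(m,c₂)=1, ρ(m) ≤ n} Λ(m)·I_A(m), where Λ is the von Mangoldt function and I_A(m) := 1 if ρ(m) divides some a ∈ A and I_A(m) := 0 otherwise. -/

import Mathlib

namespace Stmt13Aux

section Abstract
variable {R : Type*} [CommRing R] {α c : R} {V : ℕ → R} {M : R}

theorem Vadd (hV : ∀ k, V (k+2) = α * V (k+1) - c * V k) (hV0 : V 0 = 0) (hV1 : V 1 = 1) :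
    ∀ b a, V (a + b + 1) = V (a+1) * V (b+1) - c * (V a * V b) := by
  intro b
  induction b with
  | zero => intro a; simp [hV0, hV1]
  | succ n ih =>
    intro a
    have h1 := ih (a+1)
    rw [show a+1+n+1 = a+(n+1)+1 from by omega, show a+1+1 = a+2 from rfl] at h1
    rw [h1, show n+1+1 = n+2 from rfl, hV a, hV n]; ring

theorem Vcat (hV : ∀ k, V (k+2) = α * V (k+1) - c * V k) (hV0 : V 0 = 0) (hV1 : V 1 = 1) :
    ∀ k, V (k+1)^2 - V (k+2) * V k = c ^ k := by
  intro k
  induction k with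
  | zero => simp [hV0, hV1]
  | succ n ih =>
    have e3 := hV (n+1)
    have e2 := hV n
    rw [show n+1+2 = n+3 from rfl, show n+1+1 = n+2 from rfl] at e3
    linear_combination (-V (n+1)) * e3 + c * ih + (V (n+2)) * e2

theorem Vcancel_pow (hcancel : ∀ z : R, M ∣ c * z → M ∣ z) :
    ∀ (j : ℕ) (z : R), M ∣ c ^ j * z → M ∣ z := by
  intro j
  induction j with
  | zero => intro z h; simpa using h
  | succ n ih =>
    intro z h
    exact ih z (hcancel _ (by rwa [show c^(n+1) * z = c * (c^n * z) from by ring] at h))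

theorem Vdvd_add (hV : ∀ k, V (k+2) = α * V (k+1) - c * V k) (hV0 : V 0 = 0) (hV1 : V 1 = 1)
    {a b : ℕ} (ha : M ∣ V a) (hb : M ∣ V b) : M ∣ V (a + b) := by
  cases a with
  | zero => simpa using hb
  | succ a' =>
    rw [show a' + 1 + b = a' + b + 1 from by omega, Vadd hV hV0 hV1 b a']
    exact dvd_sub (ha.mul_right _) ((hb.mul_left (V a')).mul_left c)

theorem Vdvd_down (hV : ∀ k, V (k+2) = α * V (k+1) - c * V k) (hV0 : V 0 = 0) (hV1 : V 1 = 1)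
    (hcancel : ∀ z : R, M ∣ c * z → M ∣ z)
    {a b : ℕ} (ha : M ∣ V (a+1)) (hab : M ∣ V (a+1+b)) : M ∣ V b := by
  have h1 : M ∣ c * (V a * V b) := by
    have h0 := Vadd hV hV0 hV1 b a
    rw [show a + b + 1 = a+1+b from by omega] at h0
    have h2 : M ∣ V (a+1) * V (b+1) - V (a+1+b) := dvd_sub (ha.mul_right _) hab
    rw [h0] at h2
    simpa using h2
  have h2 : M ∣ V a * V b := hcancel _ h1
  have hc3 := Vcat hV hV0 hV1 a
  have h3 : M ∣ V (a+2) * (V a * V b) := h2.mul_left _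
  have h4 : M ∣ V (a+1) * (V (a+1) * V b) := (ha.mul_right _).mul_left _
  have h5 : M ∣ c ^ a * V b := by
    have : c ^ a * V b = V (a+1) * (V (a+1) * V b) - V (a+2) * (V a * V b) := by
      linear_combination (-V b) * hc3
    rw [this]
    exact dvd_sub h4 h3
  exact Vcancel_pow hcancel a _ h5

end Abstract

def W (c₁ : ℤ) (u : ℕ → ℤ) (k : ℕ) : ℤ√c₁ :=
  if Odd k then ⟨u k, 0⟩ else ⟨0, u k⟩

theorem W_dvd_iff {c₁ : ℤ} {u : ℕ → ℤ} (m : ℤ) (k : ℕ) :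
    ((m : ℤ) : ℤ√c₁) ∣ W c₁ u k ↔ m ∣ u k := by
  unfold W
  split <;> simp [Zsqrtd.intCast_dvd]

theorem W_rec {c₁ c₂ : ℤ} {u : ℕ → ℤ}
    (hrec : ∀ k, u (k+2) = (if Odd k then c₁ else 1) * u (k+1) - c₂ * u k) :
    ∀ k, W c₁ u (k+2) = Zsqrtd.sqrtd * W c₁ u (k+1) - ((c₂ : ℤ) : ℤ√c₁) * W c₁ u k := by
  intro k
  have h := hrec k
  rcases Nat.even_or_odd k with he | ho
  · have h0 : ¬ Odd k := by rw [Nat.odd_iff]; rw [Nat.even_iff] at he; omega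
    have h1 : Odd (k+1) := by rw [Nat.odd_iff]; rw [Nat.even_iff] at he; omega
    have h2 : ¬ Odd (k+2) := by rw [Nat.odd_iff]; rw [Nat.even_iff] at he; omega
    rw [if_neg h0] at h
    unfold W
    rw [if_neg h0, if_pos h1, if_neg h2]
    ext <;> simp [Zsqrtd.re_mul, Zsqrtd.im_mul, h]
  · have h0 : Odd k := ho
    have h1 : ¬ Odd (k+1) := by rw [Nat.odd_iff]; rw [Nat.odd_iff] at h0; omega
    have h2 : Odd (k+2) := by rw [Nat.odd_iff]; rw [Nat.odd_iff] at h0; omega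
    rw [if_pos h0] at h
    unfold W
    rw [if_pos h0, if_neg h1, if_pos h2]
    ext <;> simp [Zsqrtd.re_mul, Zsqrtd.im_mul, h]

theorem W_zero {c₁ : ℤ} {u : ℕ → ℤ} (h0 : u 0 = 0) : W c₁ u 0 = 0 := by
  unfold W; rw [if_neg (by decide)]; ext <;> simp [h0]

theorem W_one {c₁ : ℤ} {u : ℕ → ℤ} (h1 : u 1 = 1) : W c₁ u 1 = 1 := by
  unfold W; rw [if_pos (by decide)]; ext <;> simp [h1]

end Stmt13Aux

open scoped Classical in
theorem stmt_13
    (ζ η : ℂ) (c₁ c₂ : ℤ)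
    (hc₁ : (c₁ : ℂ) = (ζ + η) ^ 2) (hc₂ : (c₂ : ℂ) = ζ * η)
    (hc₁0 : c₁ ≠ 0) (hc₂0 : c₂ ≠ 0) (hcop : IsCoprime c₁ c₂)
    (habs : ‖η‖ ≤ ‖ζ‖)
    (hru : ∀ k : ℕ, 0 < k → (ζ / η) ^ k ≠ 1)
    (u : ℕ → ℤ)
    (hu : ∀ k : ℕ, (u k : ℂ) =
      if Odd k then (ζ ^ k - η ^ k) / (ζ - η) else (ζ ^ k - η ^ k) / (ζ ^ 2 - η ^ 2))
    (hu0 : ∀ k : ℕ, 0 < k → u k ≠ 0)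
    (ρ : ℕ → ℕ)
    (hρ : ∀ m : ℕ, 0 < m → Int.gcd (m : ℤ) c₂ = 1 →
      0 < ρ m ∧ (m : ℤ) ∣ u (ρ m) ∧ ∀ k : ℕ, 0 < k → (m : ℤ) ∣ u k → ρ m ≤ k) :
    ∀ n : ℕ, 0 < n → ∀ A : Finset ℕ, A ⊆ Finset.Icc 1 n →
      Real.log ((A.lcm u : ℤ) : ℝ) =
        ∑' m : ℕ, if 0 < m ∧ Int.gcd (m : ℤ) c₂ = 1 ∧ ρ m ≤ n then
          ArithmeticFunction.vonMangoldt m * (if ∃ a ∈ A, ρ m ∣ a then 1 else 0)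
        else 0 := by
  -- Basic nonvanishing
  have hη : η ≠ 0 := by
    intro h
    apply hc₂0
    have : (c₂ : ℂ) = 0 := by rw [hc₂, h, mul_zero]
    exact_mod_cast this
  have hζη : ζ ≠ η := by
    intro h
    exact hru 1 one_pos (by rw [pow_one, h, div_self hη])
  have hζη' : ζ + η ≠ 0 := by
    intro h
    apply hru 2 two_pos
    have hz : ζ = -η := by linear_combination h
    rw [hz]
    field_simp
  have hsub : ζ - η ≠ 0 := sub_ne_zero.mpr hζη
  have hsub2 : ζ ^ 2 - η ^ 2 ≠ 0 := by
    have : ζ ^ 2 - η ^ 2 = (ζ + η) * (ζ - η) := by ring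
    rw [this]
    exact mul_ne_zero hζη' hsub
  -- values of u
  have hu0' : u 0 = 0 := by
    have h := hu 0
    rw [if_neg (by decide)] at h
    simp at h
    exact_mod_cast h
  have hu1 : u 1 = 1 := by
    have h := hu 1
    rw [if_pos (by decide)] at h
    rw [pow_one, pow_one, div_self hsub] at h
    exact_mod_cast h
  -- the recurrence
  have hrec : ∀ k, u (k+2) = (if Odd k then c₁ else 1) * u (k+1) - c₂ * u k := by
    intro k
    rcases Nat.even_or_odd k with he | ho
    · have h0 : ¬ Odd k := by rw [Nat.odd_iff]; rw [Nat.even_iff] at he; omega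
      have h1 : Odd (k+1) := by rw [Nat.odd_iff]; rw [Nat.even_iff] at he; omega
      have h2 : ¬ Odd (k+2) := by rw [Nat.odd_iff]; rw [Nat.even_iff] at he; omega
      rw [if_neg h0]
      have e2 := hu (k+2); rw [if_neg h2] at e2
      have e1 := hu (k+1); rw [if_pos h1] at e1
      have e0 := hu k; rw [if_neg h0] at e0
      have key : ((u (k+2) : ℤ) : ℂ) = ((1 * u (k+1) - c₂ * u k : ℤ) : ℂ) := by
        push_cast
        rw [e2, e1, e0, hc₂]
        field_simp
        ring
      exact_mod_cast key
    · have h0 : Odd k := ho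
      have h1 : ¬ Odd (k+1) := by rw [Nat.odd_iff]; rw [Nat.odd_iff] at h0; omega
      have h2 : Odd (k+2) := by rw [Nat.odd_iff]; rw [Nat.odd_iff] at h0; omega
      rw [if_pos h0]
      have e2 := hu (k+2); rw [if_pos h2] at e2
      have e1 := hu (k+1); rw [if_neg h1] at e1
      have e0 := hu k; rw [if_pos h0] at e0
      have key : ((u (k+2) : ℤ) : ℂ) = ((c₁ * u (k+1) - c₂ * u k : ℤ) : ℂ) := by
        push_cast
        rw [e2, e1, e0, hc₂, hc₁]
        field_simp
        ring
      exact_mod_cast key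
    -- W machinery
  have hWrec := Stmt13Aux.W_rec hrec
  have hW0 : Stmt13Aux.W c₁ u 0 = 0 := Stmt13Aux.W_zero hu0'
  have hW1 : Stmt13Aux.W c₁ u 1 = 1 := Stmt13Aux.W_one hu1
  -- Fact A : primes dividing c₂ never divide u (a+1)
  have hFactA : ∀ p : ℕ, p.Prime → (p:ℤ) ∣ c₂ → ∀ a : ℕ, ¬ (p:ℤ) ∣ u (a+1) := by
    intro p hp hpc
    have hp2 := hp.two_le
    have hpc₁ : ¬ (p:ℤ) ∣ c₁ := by
      intro h
      have hun := hcop.isUnit_of_dvd' h hpc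
      rw [Int.isUnit_iff] at hun
      rcases hun with h1 | h1 <;> omega
    intro a
    induction a with
    | zero =>
      intro hdvd
      rw [hu1] at hdvd
      have hun := isUnit_of_dvd_one hdvd
      rw [Int.isUnit_iff] at hun
      rcases hun with h1 | h1 <;> omega
    | succ a ih =>
      intro hdvd
      rw [show a+1+1 = a+2 from rfl, hrec a] at hdvd
      have h2 : (p:ℤ) ∣ c₂ * u a := hpc.mul_right _
      have h3 : (p:ℤ) ∣ (if Odd a then c₁ else 1) * u (a+1) := by
        have := dvd_add hdvd h2
        simpa using this
      have hpZ : Prime ((p:ℕ):ℤ) := Nat.prime_iff_prime_int.mp hp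
      by_cases ho : Odd a
      · rw [if_pos ho] at h3
        rcases hpZ.dvd_mul.mp h3 with h | h
        · exact hpc₁ h
        · exact ih h
      · rw [if_neg ho, one_mul] at h3
        exact ih h3
  -- Rank of appearance controls divisibility
  have hrank : ∀ m : ℕ, 0 < m → Int.gcd (m:ℤ) c₂ = 1 →
      ∀ k, 0 < k → (((m:ℤ) ∣ u k) ↔ ρ m ∣ k) := by
    intro m hm hg
    obtain ⟨hρpos, hρdvd, hρmin⟩ := hρ m hm hg
    have hco : IsCoprime ((m:ℤ)) c₂ := Int.isCoprime_iff_gcd_eq_one.mpr hg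
    obtain ⟨s, t, hst⟩ := hco
    have hstR : (s:ℤ√c₁) * (((m:ℤ)):ℤ√c₁) + (t:ℤ√c₁) * ((c₂:ℤ√c₁)) = 1 := by
      exact_mod_cast congrArg (fun x : ℤ => (x : ℤ√c₁)) hst
    have hcancel : ∀ z : ℤ√c₁, (((m:ℤ)):ℤ√c₁) ∣ ((c₂:ℤ√c₁)) * z → (((m:ℤ)):ℤ√c₁) ∣ z := by
      intro z h
      have hz : z = (s:ℤ√c₁) * (((m:ℤ)):ℤ√c₁) * z + (t:ℤ√c₁) * (((c₂:ℤ√c₁)) * z) := by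
        linear_combination (-z) * hstR
      rw [hz]
      exact dvd_add ⟨(s:ℤ√c₁) * z, by ring⟩ (h.mul_left _)
    have hWd : ∀ j : ℕ, ((((m:ℤ)):ℤ√c₁) ∣ Stmt13Aux.W c₁ u j) ↔ (m:ℤ) ∣ u j :=
      fun j => Stmt13Aux.W_dvd_iff (m:ℤ) j
    have hWρ : (((m:ℤ)):ℤ√c₁) ∣ Stmt13Aux.W c₁ u (ρ m) := (hWd _).mpr hρdvd
    have hfwd : ∀ k, 0 < k → (m:ℤ) ∣ u k → ρ m ∣ k := by
      intro k
      induction k using Nat.strong_induction_on with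
      | _ k ih =>
        intro hk hdvd
        have hle : ρ m ≤ k := hρmin k hk hdvd
        set b := k - ρ m with hb
        by_cases hb0 : b = 0
        · have : k = ρ m := by omega
          simp [this]
        · have hWk : (((m:ℤ)):ℤ√c₁) ∣ Stmt13Aux.W c₁ u (ρ m + b) := by
            rw [show ρ m + b = k from by omega]
            exact (hWd _).mpr hdvd
          have hWρ' : (((m:ℤ)):ℤ√c₁) ∣ Stmt13Aux.W c₁ u ((ρ m - 1) + 1) := by
            rw [show ρ m - 1 + 1 = ρ m from by omega]
            exact hWρ
          have hWb : (((m:ℤ)):ℤ√c₁) ∣ Stmt13Aux.W c₁ u b := by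
            refine Stmt13Aux.Vdvd_down hWrec hW0 hW1 hcancel hWρ' ?_
            rw [show ρ m - 1 + 1 + b = ρ m + b from by omega]
            exact hWk
          have hub : (m:ℤ) ∣ u b := (hWd _).mp hWb
          have hρb : ρ m ∣ b := ih b (by omega) (by omega) hub
          have : ρ m ∣ ρ m + b := Nat.dvd_add (dvd_refl _) hρb
          rwa [show ρ m + b = k from by omega] at this
    have hbwd : ∀ t : ℕ, (((m:ℤ)):ℤ√c₁) ∣ Stmt13Aux.W c₁ u (ρ m * t) := by
      intro t
      induction t with
      | zero => rw [Nat.mul_zero, hW0]; exact dvd_zero _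
      | succ j ihk =>
        rw [show ρ m * (j+1) = ρ m * j + ρ m from by ring]
        exact Stmt13Aux.Vdvd_add hWrec hW0 hW1 ihk hWρ
    intro k hk
    constructor
    · exact hfwd k hk
    · rintro ⟨t, rfl⟩
      exact (hWd _).mp (hbwd t)
  -- prime powers dividing an lcm divide one of the terms
  have hpp2 : ∀ (p e : ℕ), p.Prime → ∀ (x y : ℤ), x ≠ 0 → y ≠ 0 →
      ((p^e : ℕ):ℤ) ∣ lcm x y → ((p^e:ℕ):ℤ) ∣ x ∨ ((p^e:ℕ):ℤ) ∣ y := by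
    intro p e hp x y hx hy hd
    rw [Int.natCast_dvd] at hd
    have hxa : x.natAbs ≠ 0 := Int.natAbs_ne_zero.mpr hx
    have hya : y.natAbs ≠ 0 := Int.natAbs_ne_zero.mpr hy
    rw [Int.natAbs_lcm, Int.lcm_def,
      Nat.Prime.pow_dvd_iff_le_factorization hp (Nat.lcm_ne_zero hxa hya),
      Nat.factorization_lcm hxa hya, Finsupp.sup_apply, le_sup_iff] at hd
    rcases hd with h | h
    · left
      rw [Int.natCast_dvd]
      exact (Nat.Prime.pow_dvd_iff_le_factorization hp hxa).mpr h
    · right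
      rw [Int.natCast_dvd]
      exact (Nat.Prime.pow_dvd_iff_le_factorization hp hya).mpr h
  have hpplcm : ∀ (s : Finset ℕ), (∀ a ∈ s, u a ≠ 0) → ∀ (p e : ℕ), p.Prime →
      ((p^e:ℕ):ℤ) ∣ s.lcm u → ((p^e:ℕ):ℤ) ∣ 1 ∨ ∃ a ∈ s, ((p^e:ℕ):ℤ) ∣ u a := by
    intro s
    induction s using Finset.induction_on with
    | empty => intro _ p e hp hd; exact Or.inl (by simpa using hd)
    | insert _ _ hnotmem =>
      rename_i a s' ih
      intro hne p e hp hd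
      rw [Finset.lcm_insert] at hd
      have hx : u a ≠ 0 := hne a (Finset.mem_insert_self a s')
      have hy : s'.lcm u ≠ 0 := by
        intro h
        rw [Finset.lcm_eq_zero_iff] at h
        obtain ⟨b, hb, hb0⟩ := h
        exact hne b (Finset.mem_insert_of_mem hb) hb0
      rcases hpp2 p e hp _ _ hx hy hd with h | h
      · exact Or.inr ⟨a, Finset.mem_insert_self a s', h⟩
      · rcases ih (fun b hb => hne b (Finset.mem_insert_of_mem hb)) p e hp h with h' | ⟨b, hb, hb'⟩
        · exact Or.inl h'
        · exact Or.inr ⟨b, Finset.mem_insert_of_mem hb, hb'⟩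
  -- Main assembly
  intro n hn A hA
  have hAne : ∀ a ∈ A, u a ≠ 0 := by
    intro a ha
    have := Finset.mem_Icc.mp (hA ha)
    exact hu0 a (by omega)
  set L : ℤ := A.lcm u with hL
  have hL0 : L ≠ 0 := by
    rw [hL]
    intro h
    rw [Finset.lcm_eq_zero_iff] at h
    obtain ⟨a, ha, ha0⟩ := h
    exact hAne a ha ha0
  have hLnn : 0 ≤ L := Int.nonneg_of_normalize_eq_self (by rw [hL]; exact Finset.normalize_lcm)
  have hLna : L.natAbs ≠ 0 := Int.natAbs_ne_zero.mpr hL0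
  have hterm : ∀ m : ℕ,
      (if 0 < m ∧ Int.gcd (m : ℤ) c₂ = 1 ∧ ρ m ≤ n then
          ArithmeticFunction.vonMangoldt m * (if ∃ a ∈ A, ρ m ∣ a then 1 else 0)
        else 0) =
      (if m ∈ L.natAbs.divisors then ArithmeticFunction.vonMangoldt m else 0) := by
    intro m
    by_cases hΛ : ArithmeticFunction.vonMangoldt m = 0
    · simp [hΛ]
    · obtain ⟨p, e, hp', he, hpe⟩ := ArithmeticFunction.vonMangoldt_ne_zero_iff.mp hΛ
      have hp : p.Prime := Nat.prime_iff.mpr hp'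
      subst hpe
      have hppne1 : ¬ ((p^e:ℕ):ℤ) ∣ 1 := by
        intro h
        rw [Int.natCast_dvd, Int.natAbs_one, Nat.dvd_one] at h
        have := hp.two_le
        have : 2 ≤ p^e := by
          calc 2 ≤ p := hp.two_le
          _ = p^1 := (pow_one p).symm
          _ ≤ p^e := Nat.pow_le_pow_right (by omega) he
        omega
      have hpos : 0 < p^e := pow_pos hp.pos e
      by_cases hdvd : (p^e : ℕ) ∣ L.natAbs
      · have hdvdZ : ((p^e:ℕ):ℤ) ∣ L := by
          rw [Int.natCast_dvd]
          exact hdvd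
        rcases hpplcm A hAne p e hp hdvdZ with h1 | ⟨a, haA, hda⟩
        · exact absurd h1 hppne1
        · have ha1 := Finset.mem_Icc.mp (hA haA)
          have hpc2 : ¬ (p:ℤ) ∣ c₂ := by
            intro hpc
            have hpd : (p:ℤ) ∣ u a := by
              refine dvd_trans ?_ hda
              exact_mod_cast dvd_pow_self p (by omega : e ≠ 0)
            obtain ⟨a', rfl⟩ : ∃ a', a = a'+1 := ⟨a-1, by omega⟩
            exact hFactA p hp hpc a' hpd
          have hg : Int.gcd ((p^e:ℕ):ℤ) c₂ = 1 := by
            have hc : Nat.Coprime p c₂.natAbs := by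
              rw [Nat.Prime.coprime_iff_not_dvd hp]
              intro h
              exact hpc2 (by rwa [Int.natCast_dvd])
            have hce : Nat.Coprime (p^e) c₂.natAbs := hc.pow_left e
            simpa [Int.gcd, Int.natAbs_pow, Int.natAbs_natCast, Nat.Coprime] using hce
          obtain ⟨hρp, hρd, hρm⟩ := hρ (p^e) hpos hg
          have hρa : ρ (p^e) ∣ a := (hrank (p^e) hpos hg a (by omega)).mp hda
          have hρn : ρ (p^e) ≤ n := le_trans (hρm a (by omega) hda) ha1.2
          rw [if_pos ⟨hpos, hg, hρn⟩, if_pos ⟨a, haA, hρa⟩, mul_one,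
            if_pos (Nat.mem_divisors.mpr ⟨hdvd, hLna⟩)]
      · rw [if_neg (fun hmem => hdvd (Nat.mem_divisors.mp hmem).1)]
        by_cases hcond : 0 < p^e ∧ Int.gcd ((p^e:ℕ):ℤ) c₂ = 1 ∧ ρ (p^e) ≤ n
        · rw [if_pos hcond]
          have hno : ¬ ∃ a ∈ A, ρ (p^e) ∣ a := by
            rintro ⟨a, haA, hra⟩
            have ha1 := Finset.mem_Icc.mp (hA haA)
            have h1 : ((p^e:ℕ):ℤ) ∣ u a := (hrank _ hcond.1 hcond.2.1 a (by omega)).mpr hra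
            have h2 : ((p^e:ℕ):ℤ) ∣ L := h1.trans (Finset.dvd_lcm haA)
            rw [Int.natCast_dvd] at h2
            exact hdvd h2
          rw [if_neg hno, mul_zero]
        · rw [if_neg hcond]
  have hsum : (∑' m : ℕ, if 0 < m ∧ Int.gcd (m : ℤ) c₂ = 1 ∧ ρ m ≤ n then
          ArithmeticFunction.vonMangoldt m * (if ∃ a ∈ A, ρ m ∣ a then 1 else 0)
        else 0) =
      ∑ m ∈ L.natAbs.divisors, ArithmeticFunction.vonMangoldt m := by
    rw [tsum_congr hterm, tsum_eq_sum (s := L.natAbs.divisors)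
      (fun m hm => by rw [if_neg hm])]
    exact Finset.sum_congr rfl (fun m hm => by rw [if_pos hm])
  rw [hsum, ArithmeticFunction.vonMangoldt_sum]
  congr 1
  rw [Nat.cast_natAbs, abs_of_nonneg hLnn]
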